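/- Let $p_X$ be a compactly supported probability measure on $\mathbb{R}^d$, $\omega > 0$, $p_\omega = p_X * \mathcal{N}(0,\omega^2 I)$, $f^\star_\omega(y) = \mathbb{E}_{q_\omega}[X|Y=y]$ the posterior mean, and $C_\omega(y) = \mathrm{Cov}_{q_\omega}(X|Y=y)$. Then the gradient of the trace of the posterior covariance satisfies $\omega^2\,\nabla_y \operatorname{tr} C_\omega(y) = W_\omega(y) - 2\,C_\omega(y)\,(f^\star_\omega(y) - y)$, where $W_\omega(y) = \mathrm{Cov}_{q_\omega}(X, \|X - y\|^2 \mid Y = y)$. -/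

import Mathlib

open MeasureTheory Real RealInnerProductSpace

/-- Posterior weight `e^{-‖x-y‖²/(2ω²)}`. -/
noncomputable def wgt {d : ℕ} (ω : ℝ) (y x : EuclideanSpace ℝ (Fin d)) : ℝ :=
  Real.exp (-‖x - y‖ ^ 2 / (2 * ω ^ 2))

/-- Posterior normalizing constant. -/
noncomputable def postZ {d : ℕ} (pX : Measure (EuclideanSpace ℝ (Fin d))) (ω : ℝ)
    (y : EuclideanSpace ℝ (Fin d)) : ℝ := ∫ x, wgt ω y x ∂pX

/-- Posterior mean `f⋆_ω(y) = E_{q_ω}[X | Y = y]`. -/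
noncomputable def postMean {d : ℕ} (pX : Measure (EuclideanSpace ℝ (Fin d))) (ω : ℝ)
    (y : EuclideanSpace ℝ (Fin d)) : EuclideanSpace ℝ (Fin d) :=
  (postZ pX ω y)⁻¹ • ∫ x, wgt ω y x • x ∂pX

/-- Trace of the posterior covariance `tr C_ω(y) = E_{q_ω}[‖X - f⋆_ω(y)‖² | Y = y]`. -/
noncomputable def postTrCov {d : ℕ} (pX : Measure (EuclideanSpace ℝ (Fin d))) (ω : ℝ)
    (y : EuclideanSpace ℝ (Fin d)) : ℝ :=
  (postZ pX ω y)⁻¹ * ∫ x, wgt ω y x * ‖x - postMean pX ω y‖ ^ 2 ∂pX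

/-- Posterior covariance `C_ω(y)` applied to a vector `v`. -/
noncomputable def postCovApply {d : ℕ} (pX : Measure (EuclideanSpace ℝ (Fin d))) (ω : ℝ)
    (y v : EuclideanSpace ℝ (Fin d)) : EuclideanSpace ℝ (Fin d) :=
  (postZ pX ω y)⁻¹ •
    ∫ x, (wgt ω y x * (inner ℝ (x - postMean pX ω y) v : ℝ)) • (x - postMean pX ω y) ∂pX

/-- Cross-covariance vector `W_ω(y) = Cov_{q_ω}(X, ‖X - y‖² | Y = y)`. -/
noncomputable def postCrossCov {d : ℕ} (pX : Measure (EuclideanSpace ℝ (Fin d))) (ω : ℝ)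
    (y : EuclideanSpace ℝ (Fin d)) : EuclideanSpace ℝ (Fin d) :=
  ((postZ pX ω y)⁻¹ • ∫ x, (wgt ω y x * ‖x - y‖ ^ 2) • x ∂pX)
    - ((postZ pX ω y)⁻¹ * ∫ x, wgt ω y x * ‖x - y‖ ^ 2 ∂pX) • postMean pX ω y

section aux
variable {d : ℕ}
local notation "E" => EuclideanSpace ℝ (Fin d)
lemma wgt_pos (ω : ℝ) (y x : E) : 0 < wgt ω y x := Real.exp_pos _

lemma wgt_le_one {ω : ℝ} (hω : 0 < ω) (y x : E) : wgt ω y x ≤ 1 := by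
  rw [wgt, ← Real.exp_zero]
  apply Real.exp_le_exp.2
  apply div_nonpos_of_nonpos_of_nonneg
  · simp [sq_nonneg]
  · positivity

lemma wgt_cont (ω : ℝ) (y : E) : Continuous (wgt ω y) := by
  unfold wgt; fun_prop

lemma integrable_of_cont {pX : Measure E} [IsProbabilityMeasure pX]
    {K : Set E} (hK : IsCompact K) (hK0 : pX Kᶜ = 0)
    {F : Type*} [NormedAddCommGroup F] {f : E → F} (hf : Continuous f) :
    Integrable f pX := by
  obtain ⟨C, hC⟩ := hK.exists_bound_of_continuousOn hf.continuousOn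
  refine Integrable.mono' (integrable_const C) hf.aestronglyMeasurable ?_
  rw [ae_iff]
  refine measure_mono_null (fun x hx => ?_) hK0
  simp only [Set.mem_setOf_eq, not_le] at hx
  intro hxK
  exact absurd (hC x hxK) (not_le.2 hx)

lemma hasFDerivAt_wgt {ω : ℝ} (hω : 0 < ω) (x y : E) :
    HasFDerivAt (fun z => wgt ω z x)
      (((ω ^ 2)⁻¹ * wgt ω y x) • innerSL ℝ (x - y)) y := by
  have h1 : HasFDerivAt (fun z : E => x - z) (-(ContinuousLinearMap.id ℝ E)) y :=
    (hasFDerivAt_id y).const_sub x |>.congr_fderiv (by ext v; simp)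
  have h2 := h1.norm_sq
  have h3 := (h2.neg).mul_const ((2 * ω ^ 2)⁻¹)
  have hg : HasFDerivAt (fun z : E => -‖x - z‖ ^ 2 / (2 * ω ^ 2))
      ((ω ^ 2)⁻¹ • innerSL ℝ (x - y)) y := by
    simp only [div_eq_mul_inv]
    refine h3.congr_fderiv ?_
    ext v
    have : (2 : ℝ) * ω ^ 2 ≠ 0 := by positivity
    simp [two_smul]
    field_simp
    ring
  have := hg.exp
  refine this.congr_fderiv ?_
  ext v
  simp [wgt, smul_smul, mul_comm]

set_option maxHeartbeats 1000000 in
set_option synthInstance.maxHeartbeats 400000 in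
lemma hasFDerivAt_wint (pX : Measure E) [IsProbabilityMeasure pX]
    {K : Set E} (hK : IsCompact K) (hK0 : pX Kᶜ = 0) {ω : ℝ} (hω : 0 < ω)
    {F : Type*} [NormedAddCommGroup F] [NormedSpace ℝ F]
    {g : E → F} (hg : Continuous g) (y : E) :
    HasFDerivAt (fun z => ∫ x, wgt ω z x • g x ∂pX)
      (∫ x, (((ω ^ 2)⁻¹ * wgt ω y x) • innerSL ℝ (x - y)).smulRight (g x) ∂pX) y := by
  obtain ⟨R, hR⟩ := hK.isBounded.subset_closedBall 0
  obtain ⟨Cg, hCg⟩ := hK.exists_bound_of_continuousOn hg.continuousOn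
  have hKne : K.Nonempty := by
    rcases K.eq_empty_or_nonempty with h | h
    · exfalso
      have : pX Set.univ = 0 := by rw [← hK0, h]; simp
      simp [measure_univ] at this
    · exact h
  have hCg0 : 0 ≤ Cg := le_trans (norm_nonneg _) (hCg _ hKne.choose_spec)
  have hR0 : 0 ≤ R := le_trans (norm_nonneg _) (by simpa using hR hKne.choose_spec)
  have hRy : (0:ℝ) ≤ R + ‖y‖ + 1 := by linarith [norm_nonneg y]
  have haeK : ∀ᵐ x ∂pX, x ∈ K := by
    rw [ae_iff]
    exact hK0
  refine hasFDerivAt_integral_of_dominated_of_fderiv_le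
    (F' := fun z x => (((ω ^ 2)⁻¹ * wgt ω z x) • innerSL ℝ (x - z)).smulRight (g x))
    (bound := fun _ => (ω ^ 2)⁻¹ * ((R + ‖y‖ + 1) * Cg)) (s := Metric.ball y 1) (Metric.ball_mem_nhds y one_pos) ?_ ?_ ?_ ?_ ?_ ?_
  · filter_upwards with z
    exact (((wgt_cont ω z).smul hg).aestronglyMeasurable)
  · exact integrable_of_cont hK hK0 ((wgt_cont ω y).smul hg)
  · apply Continuous.aestronglyMeasurable
    show Continuous fun x : E => (((ω ^ 2)⁻¹ * wgt ω y x) • innerSL ℝ (x - y)).smulRight (g x)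
    have hc : Continuous fun x : E => ((ω ^ 2)⁻¹ * wgt ω y x) • innerSL ℝ (x - y) :=
      (continuous_const.mul (wgt_cont ω y)).smul
        ((innerSL ℝ).continuous.comp (continuous_id.sub continuous_const))
    exact (isBoundedBilinearMap_smulRight (𝕜 := ℝ)).continuous.comp (hc.prodMk hg)
  · filter_upwards [haeK] with x hxK
    intro z hz
    rw [ContinuousLinearMap.norm_smulRight_apply]
    have hw : ‖(ω ^ 2)⁻¹ * wgt ω z x‖ ≤ (ω ^ 2)⁻¹ := by
      have h0 := (wgt_pos ω z x).le
      have h1 := wgt_le_one hω z x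
      rw [Real.norm_eq_abs, abs_mul, abs_of_nonneg (by positivity : (0:ℝ) ≤ (ω ^ 2)⁻¹),
        abs_of_nonneg h0]
      nlinarith [inv_nonneg.2 (sq_nonneg ω)]
    have hxz : ‖x - z‖ ≤ R + ‖y‖ + 1 := by
      have hx : ‖x‖ ≤ R := by simpa using hR hxK
      have hzy : ‖z - y‖ < 1 := by simpa [dist_eq_norm] using hz
      calc ‖x - z‖ = ‖x - y + (y - z)‖ := by abel_nf
        _ ≤ ‖x - y‖ + ‖y - z‖ := norm_add_le _ _
        _ ≤ (‖x‖ + ‖y‖) + ‖y - z‖ := by gcongr; exact norm_sub_le _ _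
        _ = ‖x‖ + ‖y‖ + ‖z - y‖ := by rw [norm_sub_rev]
        _ ≤ R + ‖y‖ + 1 := by gcongr
    have h1 : ‖((ω ^ 2)⁻¹ * wgt ω z x) • innerSL ℝ (x - z)‖ ≤ (ω ^ 2)⁻¹ * (R + ‖y‖ + 1) := by
      refine le_trans (ContinuousLinearMap.opNorm_smul_le _ _) ?_
      rw [innerSL_apply_norm]
      exact mul_le_mul hw hxz (norm_nonneg _) (by positivity)
    calc ‖((ω ^ 2)⁻¹ * wgt ω z x) • innerSL ℝ (x - z)‖ * ‖g x‖
        ≤ ((ω ^ 2)⁻¹ * (R + ‖y‖ + 1)) * Cg :=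
          mul_le_mul h1 (hCg x hxK) (norm_nonneg _)
            (mul_nonneg (by positivity) hRy)
      _ = (ω ^ 2)⁻¹ * ((R + ‖y‖ + 1) * Cg) := by ring
  · exact integrable_const _
  · filter_upwards with x
    intro z hz
    exact (hasFDerivAt_wgt hω x z).smul_const (g x)

lemma postZ_pos (pX : Measure E) [IsProbabilityMeasure pX]
    {K : Set E} (hK : IsCompact K) (hK0 : pX Kᶜ = 0) (ω : ℝ) (y : E) :
    0 < postZ pX ω y := by
  rw [postZ, integral_pos_iff_support_of_nonneg_ae
    (Filter.Eventually.of_forall fun x => (wgt_pos ω y x).le)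
    (integrable_of_cont hK hK0 (wgt_cont ω y))]
  have : Function.support (wgt ω y) = Set.univ :=
    Set.eq_univ_of_forall fun x => (wgt_pos ω y x).ne'
  rw [this]
  simp

lemma integrable_fprime (pX : Measure E) [IsProbabilityMeasure pX]
    {K : Set E} (hK : IsCompact K) (hK0 : pX Kᶜ = 0) (ω : ℝ)
    {F : Type*} [NormedAddCommGroup F] [NormedSpace ℝ F]
    {g : E → F} (hg : Continuous g) (y : E) :
    Integrable (fun x => (((ω ^ 2)⁻¹ * wgt ω y x) • innerSL ℝ (x - y)).smulRight (g x)) pX := by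
  apply integrable_of_cont hK hK0
  have hc : Continuous fun x : E => ((ω ^ 2)⁻¹ * wgt ω y x) • innerSL ℝ (x - y) :=
    (continuous_const.mul (wgt_cont ω y)).smul
      ((innerSL ℝ).continuous.comp (continuous_id.sub continuous_const))
  exact (isBoundedBilinearMap_smulRight (𝕜 := ℝ)).continuous.comp (hc.prodMk hg)

lemma wint_apply (pX : Measure E) [IsProbabilityMeasure pX]
    {K : Set E} (hK : IsCompact K) (hK0 : pX Kᶜ = 0) (ω : ℝ)
    {F : Type*} [NormedAddCommGroup F] [NormedSpace ℝ F] [CompleteSpace F]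
    {g : E → F} (hg : Continuous g) (y v : E) :
    (∫ x, (((ω ^ 2)⁻¹ * wgt ω y x) • innerSL ℝ (x - y)).smulRight (g x) ∂pX) v
      = ∫ x, (((ω ^ 2)⁻¹ * wgt ω y x) * ⟪x - y, v⟫) • g x ∂pX := by
  rw [ContinuousLinearMap.integral_apply (integrable_fprime pX hK hK0 ω hg y)]
  refine integral_congr_ae (Filter.Eventually.of_forall fun x => ?_)
  simp only [ContinuousLinearMap.smulRight_apply, ContinuousLinearMap.smul_apply,
    innerSL_apply_apply, smul_eq_mul, smul_smul]

lemma postTrCov_eq (pX : Measure E) [IsProbabilityMeasure pX]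
    {K : Set E} (hK : IsCompact K) (hK0 : pX Kᶜ = 0) (ω : ℝ) (y : E) :
    postTrCov pX ω y = (postZ pX ω y)⁻¹ * (∫ x, wgt ω y x * ‖x‖ ^ 2 ∂pX)
      - ‖postMean pX ω y‖ ^ 2 := by
  have hZpos := postZ_pos pX hK hK0 ω y
  have hZne := hZpos.ne'
  have hcw := wgt_cont (d := d) ω y
  have hintM : Integrable (fun x => wgt ω y x • x) pX :=
    integrable_of_cont hK hK0 (hcw.smul continuous_id)
  set m := postMean pX ω y with hmdef
  set M := ∫ x, wgt ω y x • x ∂pX with hMdef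
  have i1 : Integrable (fun x => wgt ω y x * ‖x‖ ^ 2) pX :=
    integrable_of_cont hK hK0 (hcw.mul (continuous_norm.pow 2))
  have i2 : Integrable (fun x => wgt ω y x * ⟪x, m⟫) pX :=
    integrable_of_cont hK hK0 (hcw.mul (continuous_id.inner continuous_const))
  have i0 : Integrable (wgt ω y) pX := integrable_of_cont hK hK0 hcw
  have hexp : ∫ x, wgt ω y x * ‖x - m‖ ^ 2 ∂pX
      = (∫ x, wgt ω y x * ‖x‖ ^ 2 ∂pX) - 2 * (∫ x, wgt ω y x * ⟪x, m⟫ ∂pX)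
        + ‖m‖ ^ 2 * ∫ x, wgt ω y x ∂pX := by
    have e1 : ∫ x, wgt ω y x * ‖x - m‖ ^ 2 ∂pX
        = ∫ x, (wgt ω y x * ‖x‖ ^ 2 - 2 * (wgt ω y x * ⟪x, m⟫) + ‖m‖ ^ 2 * wgt ω y x) ∂pX :=
      integral_congr_ae (Filter.Eventually.of_forall fun x => by
        dsimp only; rw [norm_sub_sq_real]; ring)
    have i2' : Integrable (fun x => 2 * (wgt ω y x * ⟪x, m⟫)) pX := i2.const_mul 2
    have i12 : Integrable (fun x => wgt ω y x * ‖x‖ ^ 2 - 2 * (wgt ω y x * ⟪x, m⟫)) pX :=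
      i1.sub i2'
    have i3 : Integrable (fun x => ‖m‖ ^ 2 * wgt ω y x) pX := i0.const_mul _
    rw [e1, integral_add i12 i3, integral_sub i1 i2', integral_const_mul, integral_const_mul]
  have hMm : ∫ x, wgt ω y x * ⟪x, m⟫ ∂pX = ⟪m, M⟫ := by
    rw [hMdef, ← integral_inner hintM m]
    refine integral_congr_ae (Filter.Eventually.of_forall fun x => ?_)
    dsimp only
    rw [inner_smul_right, real_inner_comm x m]
  have hmZ : m = (postZ pX ω y)⁻¹ • M := rfl
  have hinner : ⟪m, M⟫ = (postZ pX ω y)⁻¹ * ‖M‖ ^ 2 := by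
    rw [hmZ, real_inner_smul_left, real_inner_self_eq_norm_sq]
  have hnm : ‖m‖ ^ 2 = ((postZ pX ω y)⁻¹) ^ 2 * ‖M‖ ^ 2 := by
    rw [hmZ, norm_smul, mul_pow, Real.norm_eq_abs, sq_abs]
  rw [postTrCov, hexp, hMm, hinner, hnm]
  have : ∫ x, wgt ω y x ∂pX = postZ pX ω y := rfl
  rw [this]
  field_simp
  ring
end aux


lemma integral_comb6 {α : Type*} [MeasurableSpace α] (μ : Measure α)
    (a1 a2 a3 a4 a5 a6 : ℝ) {f1 f2 f3 f4 f5 f6 : α → ℝ}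
    (h1 : Integrable f1 μ) (h2 : Integrable f2 μ) (h3 : Integrable f3 μ)
    (h4 : Integrable f4 μ) (h5 : Integrable f5 μ) (h6 : Integrable f6 μ) :
    ∫ x, (a1 * f1 x + a2 * f2 x + a3 * f3 x + a4 * f4 x + a5 * f5 x + a6 * f6 x) ∂μ
      = a1 * ∫ x, f1 x ∂μ + a2 * ∫ x, f2 x ∂μ + a3 * ∫ x, f3 x ∂μ
        + a4 * ∫ x, f4 x ∂μ + a5 * ∫ x, f5 x ∂μ + a6 * ∫ x, f6 x ∂μ := by
  have e1 : Integrable (fun x => a1 * f1 x) μ := h1.const_mul _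
  have e2 : Integrable (fun x => a2 * f2 x) μ := h2.const_mul _
  have e3 : Integrable (fun x => a3 * f3 x) μ := h3.const_mul _
  have e4 : Integrable (fun x => a4 * f4 x) μ := h4.const_mul _
  have e5 : Integrable (fun x => a5 * f5 x) μ := h5.const_mul _
  have e6 : Integrable (fun x => a6 * f6 x) μ := h6.const_mul _
  have s2 : Integrable (fun x => a1 * f1 x + a2 * f2 x) μ := e1.add e2
  have s3 : Integrable (fun x => a1 * f1 x + a2 * f2 x + a3 * f3 x) μ := s2.add e3
  have s4 : Integrable (fun x => a1 * f1 x + a2 * f2 x + a3 * f3 x + a4 * f4 x) μ := s3.add e4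
  have s5 : Integrable (fun x => a1 * f1 x + a2 * f2 x + a3 * f3 x + a4 * f4 x + a5 * f5 x) μ :=
    s4.add e5
  rw [integral_add s5 e6, integral_add s4 e5, integral_add s3 e4, integral_add s2 e3,
    integral_add e1 e2, integral_const_mul, integral_const_mul, integral_const_mul,
    integral_const_mul, integral_const_mul, integral_const_mul]


set_option maxHeartbeats 4000000 in
/-- Gradient of the trace of the posterior covariance:
`ω² ∇_y tr C_ω(y) = W_ω(y) - 2 C_ω(y)(f⋆_ω(y) - y)`. -/
theorem stmt19 {d : ℕ} (pX : Measure (EuclideanSpace ℝ (Fin d)))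
    [IsProbabilityMeasure pX]
    (hsupp : ∃ K : Set (EuclideanSpace ℝ (Fin d)), IsCompact K ∧ pX Kᶜ = 0)
    (ω : ℝ) (hω : 0 < ω) :
    ∀ y : EuclideanSpace ℝ (Fin d),
      ω ^ 2 • gradient (fun z => postTrCov pX ω z) y
        = postCrossCov pX ω y - 2 • postCovApply pX ω y (postMean pX ω y - y) := by
  obtain ⟨K, hK, hK0⟩ := hsupp
  intro y
  have hω2 : (ω : ℝ) ^ 2 ≠ 0 := by positivity
  have hZpos := postZ_pos pX hK hK0 ω y
  have hZne := hZpos.ne'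
  have hcw := wgt_cont (d := d) ω y
  have hZ : HasFDerivAt (fun z => postZ pX ω z)
      (∫ x, (((ω ^ 2)⁻¹ * wgt ω y x) • innerSL ℝ (x - y)).smulRight (1 : ℝ) ∂pX) y := by
    have h := hasFDerivAt_wint pX hK hK0 hω
      (g := fun _ : EuclideanSpace ℝ (Fin d) => (1 : ℝ)) continuous_const y
    exact h.congr_of_eventuallyEq (Filter.Eventually.of_forall fun z => by simp [postZ])
  have hS : HasFDerivAt (fun z => ∫ x, wgt ω z x * ‖x‖ ^ 2 ∂pX)
      (∫ x, (((ω ^ 2)⁻¹ * wgt ω y x) • innerSL ℝ (x - y)).smulRight (‖x‖ ^ 2) ∂pX) y := by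
    have h := hasFDerivAt_wint pX hK hK0 hω
      (g := fun x : EuclideanSpace ℝ (Fin d) => ‖x‖ ^ 2) (continuous_norm.pow 2) y
    exact h.congr_of_eventuallyEq (Filter.Eventually.of_forall fun z => by simp)
  have hM : HasFDerivAt (fun z => ∫ x, wgt ω z x • x ∂pX)
      (∫ x, (((ω ^ 2)⁻¹ * wgt ω y x) • innerSL ℝ (x - y)).smulRight x ∂pX) y :=
    hasFDerivAt_wint pX hK hK0 hω continuous_id y
  have hZinv : HasFDerivAt (fun z => (postZ pX ω z)⁻¹) _ y :=
    (hasDerivAt_inv hZne).comp_hasFDerivAt y hZ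
  have hmean : HasFDerivAt (fun z => postMean pX ω z) _ y :=
    (hZinv.smul hM).congr_of_eventuallyEq
      (Filter.Eventually.of_forall fun z => by simp [postMean])
  have htr : HasFDerivAt (fun z => postTrCov pX ω z) _ y :=
    ((hZinv.mul hS).sub hmean.norm_sq).congr_of_eventuallyEq
      (Filter.Eventually.of_forall fun z => postTrCov_eq pX hK hK0 ω z)
  have hgrad := (hasFDerivAt_iff_hasGradientAt.1 htr).gradient
  rw [hgrad]
  apply ext_inner_right ℝ
  intro v
  rw [real_inner_smul_left, InnerProductSpace.toDual_symm_apply]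
  have innerL : ∀ (f : EuclideanSpace ℝ (Fin d) → EuclideanSpace ℝ (Fin d))
      (u : EuclideanSpace ℝ (Fin d)),
      Integrable f pX → ⟪∫ x, f x ∂pX, u⟫ = ∫ x, ⟪f x, u⟫ ∂pX := by
    intro f u hf
    rw [real_inner_comm, ← integral_inner hf u]
    exact integral_congr_ae (Filter.Eventually.of_forall fun x => real_inner_comm _ _)
  simp only [ContinuousLinearMap.sub_apply, ContinuousLinearMap.add_apply,
    ContinuousLinearMap.smul_apply, ContinuousLinearMap.coe_smul', Pi.smul_apply,
    ContinuousLinearMap.coe_comp', Function.comp_apply, ContinuousLinearMap.smulRight_apply,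
    innerSL_apply_apply]
  rw [wint_apply pX hK hK0 ω (g := fun _ : EuclideanSpace ℝ (Fin d) => (1 : ℝ))
      continuous_const y v,
    wint_apply pX hK hK0 ω (g := fun x : EuclideanSpace ℝ (Fin d) => ‖x‖ ^ 2)
      (continuous_norm.pow 2) y v,
    wint_apply pX hK hK0 ω (g := fun x : EuclideanSpace ℝ (Fin d) => x) continuous_id y v]
  have iMD : Integrable (fun x => ((ω ^ 2)⁻¹ * wgt ω y x * ⟪x - y, v⟫) • x) pX :=
    integrable_of_cont hK hK0 (((continuous_const.mul hcw).mul
      ((continuous_id.sub continuous_const).inner continuous_const)).smul continuous_id)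
  simp only [smul_eq_mul, mul_one, inner_add_right, real_inner_smul_right, nsmul_eq_mul]
  rw [← integral_inner iMD (postMean pX ω y)]
  simp only [postCrossCov, postCovApply, postMean, postZ, inner_sub_left, inner_add_left,
    real_inner_smul_left, inner_sub_right, real_inner_smul_right, inner_smul_right, two_smul]
  set w : EuclideanSpace ℝ (Fin d) → ℝ := wgt ω y with hwdef
  set Z : ℝ := ∫ x, w x ∂pX with hZd
  set M : EuclideanSpace ℝ (Fin d) := ∫ x, w x • x ∂pX with hMd
  have hZne' : Z ≠ 0 := hZne
  have ii : ∀ {f : EuclideanSpace ℝ (Fin d) → ℝ}, Continuous f → Integrable f pX :=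
    fun hf => integrable_of_cont hK hK0 hf
  have cw : Continuous w := hcw
  have cA : Continuous fun x : EuclideanSpace ℝ (Fin d) => (⟪x, v⟫ : ℝ) :=
    continuous_id.inner continuous_const
  have cB : Continuous fun x : EuclideanSpace ℝ (Fin d) => (⟪x, y⟫ : ℝ) :=
    continuous_id.inner continuous_const
  have cC : Continuous fun x : EuclideanSpace ℝ (Fin d) => (⟪x, M⟫ : ℝ) :=
    continuous_id.inner continuous_const
  have cn : Continuous fun x : EuclideanSpace ℝ (Fin d) => (‖x‖ ^ 2 : ℝ) :=
    continuous_norm.pow 2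
  have i0 : Integrable w pX := ii cw
  have i1 : Integrable (fun x => w x * ⟪x, v⟫) pX := ii (cw.mul cA)
  have i2 : Integrable (fun x => w x * ‖x‖ ^ 2) pX := ii (cw.mul cn)
  have i3 : Integrable (fun x => w x * (⟪x, v⟫ * ‖x‖ ^ 2)) pX := ii (cw.mul (cA.mul cn))
  have i4 : Integrable (fun x => w x * ⟪x, y⟫) pX := ii (cw.mul cB)
  have i5 : Integrable (fun x => w x * ⟪x, M⟫) pX := ii (cw.mul cC)
  have i6 : Integrable (fun x => w x * (⟪x, v⟫ * ⟪x, y⟫)) pX := ii (cw.mul (cA.mul cB))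
  have i7 : Integrable (fun x => w x * (⟪x, v⟫ * ⟪x, M⟫)) pX := ii (cw.mul (cA.mul cC))
  have iwx : Integrable (fun x : EuclideanSpace ℝ (Fin d) => w x • x) pX :=
    integrable_of_cont hK hK0 (cw.smul continuous_id)
  have hMv : (⟪M, v⟫ : ℝ) = ∫ x, w x * ⟪x, v⟫ ∂pX := by
    nth_rewrite 1 [hMd]
    rw [innerL _ v iwx]
    exact integral_congr_ae (Filter.Eventually.of_forall fun x => by
      dsimp only; rw [real_inner_smul_left])
  have hMy : (⟪M, y⟫ : ℝ) = ∫ x, w x * ⟪x, y⟫ ∂pX := by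
    nth_rewrite 1 [hMd]
    rw [innerL _ y iwx]
    exact integral_congr_ae (Filter.Eventually.of_forall fun x => by
      dsimp only; rw [real_inner_smul_left])
  have hMM : (⟪M, M⟫ : ℝ) = ∫ x, w x * ⟪x, M⟫ ∂pX := by
    nth_rewrite 1 [hMd]
    rw [innerL _ M iwx]
    exact integral_congr_ae (Filter.Eventually.of_forall fun x => by
      dsimp only; rw [real_inner_smul_left])
  have E1 : ∫ x, (ω ^ 2)⁻¹ * w x * (⟪x, v⟫ - ⟪y, v⟫) ∂pX
      = (ω ^ 2)⁻¹ * (∫ x, w x * ⟪x, v⟫ ∂pX) - (ω ^ 2)⁻¹ * ⟪y, v⟫ * Z := by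
    rw [integral_congr_ae (Filter.Eventually.of_forall (fun x => show
        (ω ^ 2)⁻¹ * w x * (⟪x, v⟫ - ⟪y, v⟫)
        = (ω ^ 2)⁻¹ * (w x * ⟪x, v⟫) + (-((ω ^ 2)⁻¹ * ⟪y, v⟫)) * w x
          + 0 * w x + 0 * w x + 0 * w x + 0 * w x from by ring)),
      integral_comb6 pX _ _ _ _ _ _ i1 i0 i0 i0 i0 i0, ← hZd]
    ring
  have E2 : ∫ x, (ω ^ 2)⁻¹ * w x * (⟪x, v⟫ - ⟪y, v⟫) * ‖x‖ ^ 2 ∂pX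
      = (ω ^ 2)⁻¹ * (∫ x, w x * (⟪x, v⟫ * ‖x‖ ^ 2) ∂pX)
        - (ω ^ 2)⁻¹ * ⟪y, v⟫ * ∫ x, w x * ‖x‖ ^ 2 ∂pX := by
    rw [integral_congr_ae (Filter.Eventually.of_forall (fun x => show
        (ω ^ 2)⁻¹ * w x * (⟪x, v⟫ - ⟪y, v⟫) * ‖x‖ ^ 2
        = (ω ^ 2)⁻¹ * (w x * (⟪x, v⟫ * ‖x‖ ^ 2)) + (-((ω ^ 2)⁻¹ * ⟪y, v⟫)) * (w x * ‖x‖ ^ 2)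
          + 0 * w x + 0 * w x + 0 * w x + 0 * w x from by ring)),
      integral_comb6 pX _ _ _ _ _ _ i3 i2 i0 i0 i0 i0]
    ring
  have E3 : ∫ x, (ω ^ 2)⁻¹ * w x * (⟪x, v⟫ - ⟪y, v⟫) * (Z⁻¹ * ⟪M, x⟫) ∂pX
      = (ω ^ 2)⁻¹ * Z⁻¹ * (∫ x, w x * (⟪x, v⟫ * ⟪x, M⟫) ∂pX)
        - (ω ^ 2)⁻¹ * ⟪y, v⟫ * Z⁻¹ * ∫ x, w x * ⟪x, M⟫ ∂pX := by
    rw [integral_congr_ae (Filter.Eventually.of_forall (fun x => show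
        (ω ^ 2)⁻¹ * w x * (⟪x, v⟫ - ⟪y, v⟫) * (Z⁻¹ * ⟪M, x⟫)
        = ((ω ^ 2)⁻¹ * Z⁻¹) * (w x * (⟪x, v⟫ * ⟪x, M⟫))
          + (-((ω ^ 2)⁻¹ * ⟪y, v⟫ * Z⁻¹)) * (w x * ⟪x, M⟫)
          + 0 * w x + 0 * w x + 0 * w x + 0 * w x from by
        rw [real_inner_comm M x]; ring)),
      integral_comb6 pX _ _ _ _ _ _ i7 i5 i0 i0 i0 i0]
    ring
  have iE4 : Integrable (fun x : EuclideanSpace ℝ (Fin d) => (w x * ‖x - y‖ ^ 2) • x) pX :=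
    integrable_of_cont hK hK0
      ((cw.mul (((continuous_id.sub continuous_const).norm).pow 2)).smul continuous_id)
  have E4 : (⟪∫ x, (w x * ‖x - y‖ ^ 2) • x ∂pX, v⟫ : ℝ)
      = (∫ x, w x * (⟪x, v⟫ * ‖x‖ ^ 2) ∂pX) - 2 * (∫ x, w x * (⟪x, v⟫ * ⟪x, y⟫) ∂pX)
        + ‖y‖ ^ 2 * ∫ x, w x * ⟪x, v⟫ ∂pX := by
    rw [innerL _ v iE4,
      integral_congr_ae (Filter.Eventually.of_forall (fun x => show
        (⟪(w x * ‖x - y‖ ^ 2) • x, v⟫ : ℝ)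
        = 1 * (w x * (⟪x, v⟫ * ‖x‖ ^ 2)) + (-2) * (w x * (⟪x, v⟫ * ⟪x, y⟫))
          + ‖y‖ ^ 2 * (w x * ⟪x, v⟫) + 0 * w x + 0 * w x + 0 * w x from by
        rw [real_inner_smul_left, norm_sub_sq_real]; ring)),
      integral_comb6 pX _ _ _ _ _ _ i3 i6 i1 i0 i0 i0]
    ring
  have E5 : ∫ x, w x * ‖x - y‖ ^ 2 ∂pX
      = (∫ x, w x * ‖x‖ ^ 2 ∂pX) - 2 * (∫ x, w x * ⟪x, y⟫ ∂pX) + ‖y‖ ^ 2 * Z := by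
    rw [integral_congr_ae (Filter.Eventually.of_forall (fun x => show
        w x * ‖x - y‖ ^ 2
        = 1 * (w x * ‖x‖ ^ 2) + (-2) * (w x * ⟪x, y⟫) + ‖y‖ ^ 2 * w x
          + 0 * w x + 0 * w x + 0 * w x from by rw [norm_sub_sq_real]; ring)),
      integral_comb6 pX _ _ _ _ _ _ i2 i4 i0 i0 i0 i0, ← hZd]
    ring
  have cG : Continuous fun x : EuclideanSpace ℝ (Fin d) =>
      (Z⁻¹ * (⟪x, M⟫ - Z⁻¹ * ⟪M, M⟫) - (⟪x, y⟫ - Z⁻¹ * ⟪M, y⟫) : ℝ) :=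
    (continuous_const.mul (cC.sub continuous_const)).sub (cB.sub continuous_const)
  have iE6 : Integrable (fun x : EuclideanSpace ℝ (Fin d) =>
      (w x * (Z⁻¹ * (⟪x, M⟫ - Z⁻¹ * ⟪M, M⟫) - (⟪x, y⟫ - Z⁻¹ * ⟪M, y⟫))) • (x - Z⁻¹ • M)) pX :=
    integrable_of_cont hK hK0 ((cw.mul cG).smul (continuous_id.sub continuous_const))
  have E6 : (⟪∫ x, (w x * (Z⁻¹ * (⟪x, M⟫ - Z⁻¹ * ⟪M, M⟫) - (⟪x, y⟫ - Z⁻¹ * ⟪M, y⟫)))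
        • (x - Z⁻¹ • M) ∂pX, v⟫ : ℝ)
      = Z⁻¹ * (∫ x, w x * (⟪x, v⟫ * ⟪x, M⟫) ∂pX) - (∫ x, w x * (⟪x, v⟫ * ⟪x, y⟫) ∂pX)
        + (Z⁻¹ * ⟪M, y⟫ - Z⁻¹ ^ 2 * ⟪M, M⟫) * (∫ x, w x * ⟪x, v⟫ ∂pX)
        - Z⁻¹ ^ 2 * ⟪M, v⟫ * (∫ x, w x * ⟪x, M⟫ ∂pX)
        + Z⁻¹ * ⟪M, v⟫ * (∫ x, w x * ⟪x, y⟫ ∂pX)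
        - Z⁻¹ * ⟪M, v⟫ * (Z⁻¹ * ⟪M, y⟫ - Z⁻¹ ^ 2 * ⟪M, M⟫) * Z := by
    rw [innerL _ v iE6,
      integral_congr_ae (Filter.Eventually.of_forall (fun x => show
        (⟪(w x * (Z⁻¹ * (⟪x, M⟫ - Z⁻¹ * ⟪M, M⟫) - (⟪x, y⟫ - Z⁻¹ * ⟪M, y⟫))) • (x - Z⁻¹ • M), v⟫ : ℝ)
        = Z⁻¹ * (w x * (⟪x, v⟫ * ⟪x, M⟫)) + (-1) * (w x * (⟪x, v⟫ * ⟪x, y⟫))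
          + (Z⁻¹ * ⟪M, y⟫ - Z⁻¹ ^ 2 * ⟪M, M⟫) * (w x * ⟪x, v⟫)
          + (-(Z⁻¹ ^ 2 * ⟪M, v⟫)) * (w x * ⟪x, M⟫)
          + (Z⁻¹ * ⟪M, v⟫) * (w x * ⟪x, y⟫)
          + (-(Z⁻¹ * ⟪M, v⟫ * (Z⁻¹ * ⟪M, y⟫ - Z⁻¹ ^ 2 * ⟪M, M⟫))) * w x from by
        rw [real_inner_smul_left, inner_sub_left, real_inner_smul_left]; ring)),
      integral_comb6 pX _ _ _ _ _ _ i7 i6 i1 i5 i4 i0, ← hZd]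
    ring
  rw [E1, E2, E3, E4, E5, E6, hMv, hMy, hMM]
  push_cast
  field_simp
  ring
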